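/- Let (A, e) be an order-unit space with a Lipschitz seminorm L that is a closed Lip-norm, and let r_A denote the radius of the state space S(A) with metric ρ_L(μ,ν) = sup{|μ(a)−ν(a)| : L(a) ≤ 1}. Then for any R ≥ r_A, the unit ball of L decomposes as { a ∈ A : L(a) ≤ 1 } = ℝe + { a ∈ A : L(a) ≤ 1, ‖a‖ ≤ R }. -/

import Mathlib

variable {A : Type*} [NormedAddCommGroup A] [NormedSpace ℝ A]

/-- The state space of `(A, e)`: functionals with `μ(e) = ‖μ‖ = 1`. -/
def states (e : A) : Set (A →L[ℝ] ℝ) := {μ | μ e = 1 ∧ ‖μ‖ = 1}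

/-- The metric `ρ_L(μ,ν) = sup { |μ(a) − ν(a)| : L(a) ≤ 1 }` on the state space. -/
noncomputable def stateDist (L : A → ℝ) (μ ν : A →L[ℝ] ℝ) : ℝ :=
  sSup {s : ℝ | ∃ a : A, L a ≤ 1 ∧ s = |μ a - ν a|}

namespace LipBallAux

/-- The set whose supremum is `stateDist`. -/
def distSet (L : A → ℝ) (μ ν : A →L[ℝ] ℝ) : Set ℝ :=
  {s : ℝ | ∃ a : A, L a ≤ 1 ∧ s = |μ a - ν a|}

theorem stateDist_eq (L : A → ℝ) (μ ν : A →L[ℝ] ℝ) :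
    stateDist L μ ν = sSup (distSet L μ ν) := rfl

theorem L_zero (L : A → ℝ) (hsmul : ∀ (c : ℝ) (a : A), L (c • a) = |c| * L a) :
    L 0 = 0 := by
  have := hsmul 0 0
  simpa using this

theorem zero_mem_distSet (L : A → ℝ) (hsmul : ∀ (c : ℝ) (a : A), L (c • a) = |c| * L a)
    (μ ν : A →L[ℝ] ℝ) : (0 : ℝ) ∈ distSet L μ ν :=
  ⟨0, by rw [L_zero L hsmul]; norm_num, by simp⟩

theorem distSet_self (L : A → ℝ) (hsmul : ∀ (c : ℝ) (a : A), L (c • a) = |c| * L a)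
    (μ : A →L[ℝ] ℝ) : distSet L μ μ = {0} := by
  ext s
  constructor
  · rintro ⟨a, _, rfl⟩; simp
  · rintro rfl; exact zero_mem_distSet L hsmul μ μ

theorem stateDist_self (L : A → ℝ) (hsmul : ∀ (c : ℝ) (a : A), L (c • a) = |c| * L a)
    (μ : A →L[ℝ] ℝ) : stateDist L μ μ = 0 := by
  rw [stateDist_eq, distSet_self L hsmul, csSup_singleton]

/-- Triangle-type transfer of boundedness. -/
theorem bddAbove_trans {L : A → ℝ} {p q r : A →L[ℝ] ℝ}
    (h1 : BddAbove (distSet L p q)) (h2 : BddAbove (distSet L p r)) :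
    BddAbove (distSet L q r) := by
  obtain ⟨K1, hK1⟩ := h1
  obtain ⟨K2, hK2⟩ := h2
  refine ⟨K1 + K2, ?_⟩
  rintro s ⟨a, ha, rfl⟩
  have e1 : |p a - q a| ≤ K1 := hK1 ⟨a, ha, rfl⟩
  have e2 : |p a - r a| ≤ K2 := hK2 ⟨a, ha, rfl⟩
  have : |q a - r a| ≤ |p a - q a| + |p a - r a| := by
    have := abs_sub (p a - q a) (p a - r a)
    calc |q a - r a| = |(p a - r a) - (p a - q a)| := by ring_nf
    _ ≤ |p a - r a| + |p a - q a| := abs_sub _ _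
    _ = |p a - q a| + |p a - r a| := by ring
  linarith

theorem exists_big {L : A → ℝ} {μ ν : A →L[ℝ] ℝ}
    (h : ¬BddAbove (distSet L μ ν)) (T : ℝ) :
    ∃ b : A, L b ≤ 1 ∧ T < |μ b - ν b| := by
  obtain ⟨y, hy, hTy⟩ := not_bddAbove_iff.1 h T
  obtain ⟨a, ha, rfl⟩ := hy
  exact ⟨a, ha, hTy⟩

/-- If the distance set of `μ, ν` is unbounded, so is that of any two distinct
convex-type combinations along the segment. -/
theorem unbdd_segment {L : A → ℝ} {μ ν : A →L[ℝ] ℝ}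
    (h : ¬BddAbove (distSet L μ ν)) {t t' : ℝ} (hne : t ≠ t') :
    ¬BddAbove (distSet L ((1 - t) • μ + t • ν) ((1 - t') • μ + t' • ν)) := by
  rw [not_bddAbove_iff]
  intro K
  have hpos : 0 < |t' - t| := abs_pos.2 (sub_ne_zero.2 (Ne.symm hne))
  obtain ⟨b, hb, hbig⟩ := exists_big h (|K| / |t' - t|)
  refine ⟨|((1 - t) • μ + t • ν) b - ((1 - t') • μ + t' • ν) b|, ⟨b, hb, rfl⟩, ?_⟩
  have happ : ((1 - t) • μ + t • ν) b - ((1 - t') • μ + t' • ν) b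
      = (t' - t) * (μ b - ν b) := by
    simp only [ContinuousLinearMap.add_apply, ContinuousLinearMap.smul_apply, smul_eq_mul]
    ring
  rw [happ, abs_mul]
  have h1 : |t' - t| * (|K| / |t' - t|) < |t' - t| * |μ b - ν b| :=
    (mul_lt_mul_iff_right₀ hpos).2 hbig
  rw [mul_div_cancel₀ _ (ne_of_gt hpos)] at h1
  calc K ≤ |K| := le_abs_self K
  _ < |t' - t| * |μ b - ν b| := h1

end LipBallAux

open LipBallAux in
/-- Key lemma: under the Lip-norm hypothesis, every distance set is bounded above. -/
theorem bddAbove_distSet_of_states (e : A) (L : A → ℝ)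
    (hsmul : ∀ (c : ℝ) (a : A), L (c • a) = |c| * L a)
    (hkadison : ∀ a : A, ‖a‖ = sSup {r : ℝ | ∃ μ ∈ states e, r = |μ a|})
    (hLipnorm : TopologicalSpace.generateFrom
        {B : Set (states e) | ∃ (μ : states e) (ε : ℝ), 0 < ε ∧
          B = {ν : states e | stateDist L ↑μ ↑ν < ε}}
      = TopologicalSpace.induced
          (fun (μ : states e) (a : A) => (↑μ : A →L[ℝ] ℝ) a) inferInstance)
    {μ ν : A →L[ℝ] ℝ} (hμ : μ ∈ states e) (hν : ν ∈ states e) :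
    BddAbove (distSet L μ ν) := by
  classical
  by_contra h
  -- μ ≠ ν
  have hμν : μ ≠ ν := by
    rintro rfl
    exact h ⟨0, by rintro s ⟨a, ha, rfl⟩; simp⟩
  -- ‖e‖ = 1
  have he : ‖e‖ = 1 := by
    rw [hkadison e]
    have hset : {r : ℝ | ∃ σ ∈ states e, r = |σ e|} = {1} := by
      ext r
      constructor
      · rintro ⟨σ, hσ, rfl⟩; simp [hσ.1]
      · rintro rfl; exact ⟨μ, hμ, by simp [hμ.1]⟩
    rw [hset, csSup_singleton]
  -- the segment
  set γ : ℝ → (A →L[ℝ] ℝ) := fun t => (1 - t) • μ + t • ν with hγ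
  have hγapp : ∀ (t : ℝ) (b : A), γ t b = (1 - t) * μ b + t * ν b := by
    intro t b
    simp [hγ, smul_eq_mul]
  have hγstate : ∀ t : ℝ, 0 ≤ t → t ≤ 1 → γ t ∈ states e := by
    intro t ht0 ht1
    have h1 : γ t e = 1 := by rw [hγapp, hμ.1, hν.1]; ring
    refine ⟨h1, le_antisymm ?_ ?_⟩
    · calc ‖γ t‖ ≤ ‖(1 - t) • μ‖ + ‖t • ν‖ := norm_add_le _ _
      _ ≤ |1 - t| * ‖μ‖ + |t| * ‖ν‖ := by
          refine add_le_add ?_ ?_ <;>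
            (rw [← Real.norm_eq_abs]; exact ContinuousLinearMap.opNorm_smul_le _ _)
      _ = 1 := by
          rw [hμ.2, hν.2, abs_of_nonneg (by linarith), abs_of_nonneg ht0]; ring
    · have hle := (γ t).le_opNorm e
      rw [h1, he, mul_one] at hle
      simpa using hle
  -- a point where μ < ν
  obtain ⟨a₀, ha₀⟩ : ∃ a₀ : A, μ a₀ < ν a₀ := by
    obtain ⟨a₁, ha₁⟩ : ∃ a, μ a ≠ ν a := by
      by_contra h'
      push_neg at h'
      exact hμν (ContinuousLinearMap.ext h')
    rcases ha₁.lt_or_gt with h' | h'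
    · exact ⟨a₁, h'⟩
    · exact ⟨-a₁, by simp only [map_neg]; linarith⟩
  set c : ℝ := (μ a₀ + ν a₀) / 2 with hc
  have hγa₀ : ∀ t : ℝ, γ t a₀ = μ a₀ + t * (ν a₀ - μ a₀) := by
    intro t; rw [hγapp]; ring
  -- the two separating sets
  set U : Set ↥(states e) := {σ : ↥(states e) | (↑σ : A →L[ℝ] ℝ) a₀ < c} with hU
  set V : Set ↥(states e) := {σ : ↥(states e) | c < (↑σ : A →L[ℝ] ℝ) a₀} with hV
  set tind : TopologicalSpace ↥(states e) := TopologicalSpace.induced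
      (fun (μ : states e) (a : A) => (↑μ : A →L[ℝ] ℝ) a) inferInstance with htind
  set Sub : Set (Set ↥(states e)) := {B : Set (states e) | ∃ (μ : states e) (ε : ℝ), 0 < ε ∧
          B = {ν : states e | stateDist L ↑μ ↑ν < ε}} with hSub
  have hUopen : @IsOpen _ tind U :=
    ⟨{g : A → ℝ | g a₀ < c}, isOpen_lt (continuous_apply a₀) continuous_const, rfl⟩
  have hVopen : @IsOpen _ tind V :=
    ⟨{g : A → ℝ | c < g a₀}, isOpen_lt continuous_const (continuous_apply a₀), rfl⟩
  have hUg : @IsOpen _ (TopologicalSpace.generateFrom Sub) U := by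
    rw [hLipnorm]; exact hUopen
  have hVg : @IsOpen _ (TopologicalSpace.generateFrom Sub) V := by
    rw [hLipnorm]; exact hVopen
  -- x and y
  have hx3 : (0:ℝ) ≤ 1/3 := by norm_num
  set x : ↥(states e) := ⟨γ (1/3), hγstate _ (by norm_num) (by norm_num)⟩ with hxdef
  set y : ↥(states e) := ⟨γ (2/3), hγstate _ (by norm_num) (by norm_num)⟩ with hydef
  have hxU : x ∈ U := by
    show γ (1/3) a₀ < c
    rw [hγa₀, hc]; linarith
  have hyV : y ∈ V := by
    show c < γ (2/3) a₀
    rw [hγa₀, hc]; linarith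
  -- basis extraction
  have basis := @TopologicalSpace.isTopologicalBasis_of_subbasis _
    (TopologicalSpace.generateFrom Sub) Sub rfl
  obtain ⟨v₁, hv₁mem, hxv₁, hv₁U⟩ :=
    @TopologicalSpace.IsTopologicalBasis.exists_subset_of_mem_open _
      (TopologicalSpace.generateFrom Sub) _ basis x U hxU hUg
  obtain ⟨v₂, hv₂mem, hyv₂, hv₂V⟩ :=
    @TopologicalSpace.IsTopologicalBasis.exists_subset_of_mem_open _
      (TopologicalSpace.generateFrom Sub) _ basis y V hyV hVg
  obtain ⟨f₁, ⟨hf₁fin, hf₁S⟩, rfl⟩ := hv₁mem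
  obtain ⟨f₂, ⟨hf₂fin, hf₂S⟩, rfl⟩ := hv₂mem
  set F : Set (Set ↥(states e)) := f₁ ∪ f₂ with hF
  have hFfin : F.Finite := hf₁fin.union hf₂fin
  have hFS : F ⊆ Sub := Set.union_subset hf₁S hf₂S
  -- choose representatives
  have hrep : ∀ B : Set ↥(states e), ∃ (σ : A →L[ℝ] ℝ) (ε : ℝ), B ∈ Sub →
      (0 < ε ∧ B = {ν' : ↥(states e) | stateDist L σ ↑ν' < ε}) := by
    intro B
    by_cases hB : B ∈ Sub
    · obtain ⟨σ, ε, hε, rfl⟩ := hB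
      exact ⟨↑σ, ε, fun _ => ⟨hε, rfl⟩⟩
    · exact ⟨0, 0, fun hmem => absurd hmem hB⟩
  choose σg εg hg using hrep
  -- bad parameters
  set bad : Set ℝ := ⋃ B ∈ F, {t : ℝ | BddAbove (distSet L (σg B) (γ t))} with hbad
  have hbadfin : bad.Finite := by
    refine hFfin.biUnion (fun B _ => Set.Subsingleton.finite ?_)
    intro t ht t' ht'
    by_contra hne
    exact unbdd_segment h hne (bddAbove_trans ht ht')
  obtain ⟨t₀, ht₀⟩ := ((Set.infinite_coe_iff.mp (Set.Ioo.infinite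
    (show (0:ℝ) < 1 by norm_num))).diff hbadfin).nonempty
  have ht₀Ioo : t₀ ∈ Set.Ioo (0:ℝ) 1 := ht₀.1
  set z : ↥(states e) := ⟨γ t₀, hγstate _ (le_of_lt ht₀Ioo.1) (le_of_lt ht₀Ioo.2)⟩ with hzdef
  have hzB : ∀ B ∈ F, z ∈ B := by
    intro B hB
    obtain ⟨hε, hBeq⟩ := hg B (hFS hB)
    rw [hBeq]
    show stateDist L (σg B) (γ t₀) < εg B
    have hnb : ¬BddAbove (distSet L (σg B) (γ t₀)) := by
      intro hbdd
      exact ht₀.2 (Set.mem_biUnion hB hbdd)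
    rw [stateDist_eq, Real.sSup_of_not_bddAbove hnb]
    exact hε
  have hzU : z ∈ U := hv₁U (by
    intro B hB
    exact hzB B (Set.mem_union_left _ hB))
  have hzV : z ∈ V := hv₂V (by
    intro B hB
    exact hzB B (Set.mem_union_right _ hB))
  have h1 : (↑z : A →L[ℝ] ℝ) a₀ < c := hzU
  have h2 : c < (↑z : A →L[ℝ] ℝ) a₀ := hzV
  linarith

theorem lip_ball_decomposition (e : A) (L : A → ℝ)
    (hsub : ∀ a b : A, L (a + b) ≤ L a + L b)
    (hsmul : ∀ (c : ℝ) (a : A), L (c • a) = |c| * L a)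
    (hker : ∀ a : A, L a = 0 ↔ ∃ c : ℝ, a = c • e)
    (hclosed : IsClosed {a : A | L a ≤ 1})
    (hkadison : ∀ a : A, ‖a‖ = sSup {r : ℝ | ∃ μ ∈ states e, r = |μ a|})
    (hLipnorm : TopologicalSpace.generateFrom
        {B : Set (states e) | ∃ (μ : states e) (ε : ℝ), 0 < ε ∧
          B = {ν : states e | stateDist L ↑μ ↑ν < ε}}
      = TopologicalSpace.induced
          (fun (μ : states e) (a : A) => (↑μ : A →L[ℝ] ℝ) a) inferInstance)
    (R : ℝ)
    (hR : sSup {r : ℝ | ∃ μ ∈ states e, ∃ ν ∈ states e, r = stateDist L μ ν} / 2 ≤ R) :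
    {a : A | L a ≤ 1} =
      {b : A | ∃ (c : ℝ) (a : A), L a ≤ 1 ∧ ‖a‖ ≤ R ∧ b = c • e + a} := by
  classical
  open LipBallAux in
  ext b
  simp only [Set.mem_setOf_eq]
  constructor
  · intro hLb
    by_cases hne : (states e).Nonempty
    · obtain ⟨μ₀, hμ₀⟩ := hne
      have hBdd : ∀ {μ ν : A →L[ℝ] ℝ}, μ ∈ states e → ν ∈ states e →
          BddAbove (LipBallAux.distSet L μ ν) :=
        fun hμ hν => bddAbove_distSet_of_states e L hsmul hkadison hLipnorm hμ hν
      have hptle : ∀ {μ ν : A →L[ℝ] ℝ}, μ ∈ states e → ν ∈ states e →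
          ∀ x : A, L x ≤ 1 → |μ x - ν x| ≤ stateDist L μ ν :=
        fun hμ hν x hx => le_csSup (hBdd hμ hν) ⟨x, hx, rfl⟩
      -- compactness of the state space in the weak-* topology (Banach-Alaoglu)
      have hKw : IsCompact (WeakDual.toStrongDual ⁻¹' (states e) : Set (WeakDual ℝ A)) := by
        have he1 : ‖e‖ = 1 := by
          rw [hkadison e]
          have hset : {r : ℝ | ∃ σ ∈ states e, r = |σ e|} = {1} := by
            ext r
            constructor
            · rintro ⟨σ, hσ, rfl⟩; simp [hσ.1]
            · rintro rfl; exact ⟨μ₀, hμ₀, by simp [hμ₀.1]⟩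
          rw [hset, csSup_singleton]
        have hball := WeakDual.isCompact_closedBall (𝕜 := ℝ) (E := A) 0 1
        have hcl : IsClosed {μ : WeakDual ℝ A | μ e = 1} :=
          isClosed_eq (WeakDual.eval_continuous e) continuous_const
        have hseteq : (WeakDual.toStrongDual ⁻¹' (states e) : Set (WeakDual ℝ A))
            = (WeakDual.toStrongDual ⁻¹' Metric.closedBall 0 1) ∩ {μ : WeakDual ℝ A | μ e = 1} := by
          ext μ
          constructor
          · rintro ⟨h1, h2⟩
            refine ⟨?_, h1⟩
            simp only [Set.mem_preimage, Metric.mem_closedBall, dist_zero_right]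
            rw [h2]
          · rintro ⟨h1, h2⟩
            simp only [Set.mem_preimage, Metric.mem_closedBall, dist_zero_right] at h1
            refine ⟨h2, le_antisymm h1 ?_⟩
            have hle := (WeakDual.toStrongDual μ).le_opNorm e
            rw [he1, mul_one] at hle
            have happ : (WeakDual.toStrongDual μ) e = μ e := rfl
            rw [happ, h2] at hle
            simpa using hle
        rw [hseteq]
        exact hball.inter_right hcl
      have hKc : @IsCompact (A →L[ℝ] ℝ)
          (TopologicalSpace.induced (fun (μ : A →L[ℝ] ℝ) (a : A) => μ a) Pi.topologicalSpace)
          (states e) := hKw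
      have hcs := (@isCompact_iff_compactSpace _
        (TopologicalSpace.induced (fun (μ : A →L[ℝ] ℝ) (a : A) => μ a) Pi.topologicalSpace)
        (states e)).1 hKc
      have hcomp : @CompactSpace ↥(states e) (TopologicalSpace.induced
          (fun (μ : states e) (a : A) => (↑μ : A →L[ℝ] ℝ) a) inferInstance) := by
        have htt : TopologicalSpace.induced
            (fun (μ : states e) (a : A) => (↑μ : A →L[ℝ] ℝ) a)
              (inferInstance : TopologicalSpace (A → ℝ))
            = TopologicalSpace.induced (Subtype.val : ↥(states e) → (A →L[ℝ] ℝ))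
              (TopologicalSpace.induced (fun (μ : A →L[ℝ] ℝ) (a : A) => μ a)
                Pi.topologicalSpace) := by
          rw [induced_compose]
          rfl
        rw [htt]
        exact hcs
      have hcompgen : @CompactSpace ↥(states e) (TopologicalSpace.generateFrom
          {B : Set (states e) | ∃ (μ : states e) (ε : ℝ), 0 < ε ∧
            B = {ν : states e | stateDist L ↑μ ↑ν < ε}}) := by
        rw [hLipnorm]
        exact hcomp
      -- finite cover by unit balls
      have hballopen : ∀ σ : ↥(states e), @IsOpen _ (TopologicalSpace.generateFrom
          {B : Set (states e) | ∃ (μ : states e) (ε : ℝ), 0 < ε ∧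
            B = {ν : states e | stateDist L ↑μ ↑ν < ε}})
          {ν' : ↥(states e) | stateDist L ↑σ ↑ν' < 1} :=
        fun σ => TopologicalSpace.GenerateOpen.basic _ ⟨σ, 1, one_pos, rfl⟩
      have hcover : (Set.univ : Set ↥(states e)) ⊆
          ⋃ σ : ↥(states e), {ν' : ↥(states e) | stateDist L ↑σ ↑ν' < 1} := by
        intro σ _
        refine Set.mem_iUnion.2 ⟨σ, ?_⟩
        show stateDist L ↑σ ↑σ < 1
        rw [LipBallAux.stateDist_self L hsmul]
        norm_num
      obtain ⟨fs, hfs⟩ := @IsCompact.elim_finite_subcover ↥(states e)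
        (TopologicalSpace.generateFrom
          {B : Set (states e) | ∃ (μ : states e) (ε : ℝ), 0 < ε ∧
            B = {ν : states e | stateDist L ↑μ ↑ν < ε}}) _ _
        (@isCompact_univ ↥(states e) (TopologicalSpace.generateFrom
          {B : Set (states e) | ∃ (μ : states e) (ε : ℝ), 0 < ε ∧
            B = {ν : states e | stateDist L ↑μ ↑ν < ε}}) hcompgen)
        (fun σ : ↥(states e) => {ν' : ↥(states e) | stateDist L ↑σ ↑ν' < 1}) hballopen hcover
      have hget : ∀ σ : ↥(states e), ∃ i ∈ fs, stateDist L ↑i ↑σ < 1 := by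
        intro σ
        have hmem := hfs (Set.mem_univ σ)
        rw [Set.mem_iUnion₂] at hmem
        obtain ⟨i, hi, hmem⟩ := hmem
        exact ⟨i, hi, hmem⟩
      obtain ⟨i₀, hi₀, _⟩ := hget ⟨μ₀, hμ₀⟩
      have hfsne : fs.Nonempty := ⟨i₀, hi₀⟩
      set K : ℝ := fs.sup' hfsne (fun σ => stateDist L ↑σ μ₀) with hK
      have hKle : ∀ i ∈ fs, stateDist L ↑i μ₀ ≤ K :=
        fun i hi => Finset.le_sup' (fun σ : ↥(states e) => stateDist L ↑σ μ₀) hi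
      -- uniform bound on pairwise distances
      have hpair : ∀ {μ ν : A →L[ℝ] ℝ}, μ ∈ states e → ν ∈ states e →
          stateDist L μ ν ≤ 2 + 2*K := by
        intro μ ν hμ hν
        obtain ⟨i, hi, hdi⟩ := hget ⟨μ, hμ⟩
        obtain ⟨j, hj, hdj⟩ := hget ⟨ν, hν⟩
        rw [LipBallAux.stateDist_eq]
        refine csSup_le ⟨0, LipBallAux.zero_mem_distSet L hsmul μ ν⟩ ?_
        rintro s ⟨x, hx, rfl⟩
        have h1 : |(↑i : A →L[ℝ] ℝ) x - μ x| ≤ stateDist L ↑i μ := hptle i.2 hμ x hx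
        have h2 : |(↑j : A →L[ℝ] ℝ) x - ν x| ≤ stateDist L ↑j ν := hptle j.2 hν x hx
        have h3 : |(↑i : A →L[ℝ] ℝ) x - μ₀ x| ≤ stateDist L ↑i μ₀ := hptle i.2 hμ₀ x hx
        have h4 : |(↑j : A →L[ℝ] ℝ) x - μ₀ x| ≤ stateDist L ↑j μ₀ := hptle j.2 hμ₀ x hx
        have hi' : stateDist L ↑i μ₀ ≤ K := hKle i hi
        have hj' : stateDist L ↑j μ₀ ≤ K := hKle j hj
        have t1 : |μ x - ν x| ≤ |μ x - μ₀ x| + |μ₀ x - ν x| := abs_sub_le _ _ _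
        have t2 : |μ x - μ₀ x| ≤ |μ x - (↑i : A →L[ℝ] ℝ) x| + |(↑i : A →L[ℝ] ℝ) x - μ₀ x| :=
          abs_sub_le _ _ _
        have t3 : |μ₀ x - ν x| ≤ |μ₀ x - (↑j : A →L[ℝ] ℝ) x| + |(↑j : A →L[ℝ] ℝ) x - ν x| :=
          abs_sub_le _ _ _
        have c1 : |μ x - (↑i : A →L[ℝ] ℝ) x| = |(↑i : A →L[ℝ] ℝ) x - μ x| := abs_sub_comm _ _
        have c2 : |μ₀ x - (↑j : A →L[ℝ] ℝ) x| = |(↑j : A →L[ℝ] ℝ) x - μ₀ x| := abs_sub_comm _ _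
        linarith
      have hdiamBdd : BddAbove {r : ℝ | ∃ μ ∈ states e, ∃ ν ∈ states e, r = stateDist L μ ν} :=
        ⟨2 + 2*K, by rintro r ⟨μ, hμ, ν, hν, rfl⟩; exact hpair hμ hν⟩
      have hzmem : (0:ℝ) ∈ {r : ℝ | ∃ μ ∈ states e, ∃ ν ∈ states e, r = stateDist L μ ν} :=
        ⟨μ₀, hμ₀, μ₀, hμ₀, (LipBallAux.stateDist_self L hsmul μ₀).symm⟩
      have hR0 : 0 ≤ R := by
        have := le_csSup hdiamBdd hzmem
        linarith
      have h2R : ∀ {μ ν : A →L[ℝ] ℝ}, μ ∈ states e → ν ∈ states e →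
          ∀ x : A, L x ≤ 1 → μ x - ν x ≤ 2*R := by
        intro μ ν hμ hν x hx
        have h1 : |μ x - ν x| ≤ stateDist L μ ν := hptle hμ hν x hx
        have h2 : stateDist L μ ν ≤
            sSup {r : ℝ | ∃ μ ∈ states e, ∃ ν ∈ states e, r = stateDist L μ ν} :=
          le_csSup hdiamBdd ⟨μ, hμ, ν, hν, rfl⟩
        have h3 := le_abs_self (μ x - ν x)
        linarith
      -- construct the decomposition
      set T : Set ℝ := {r : ℝ | ∃ μ ∈ states e, r = μ b} with hT
      have hTne : T.Nonempty := ⟨μ₀ b, μ₀, hμ₀, rfl⟩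
      have habs' : ∀ {μ : A →L[ℝ] ℝ}, μ ∈ states e → ∀ x : A, |μ x| ≤ ‖x‖ := by
        intro μ hμ x
        have hle := μ.le_opNorm x
        rw [hμ.2, one_mul] at hle
        simpa [Real.norm_eq_abs] using hle
      have hTbdd : BddAbove T := by
        refine ⟨‖b‖, ?_⟩
        rintro r ⟨μ, hμ, rfl⟩
        exact le_trans (le_abs_self _) (habs' hμ b)
      have hTbddb : BddBelow T := by
        refine ⟨-‖b‖, ?_⟩
        rintro r ⟨μ, hμ, rfl⟩
        have := habs' hμ b
        rw [abs_le] at this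
        linarith [this.1]
      set M : ℝ := sSup T with hM
      set m : ℝ := sInf T with hm
      set c : ℝ := (M + m)/2 with hc
      have hMm : M ≤ m + 2*R := by
        refine csSup_le hTne ?_
        rintro r ⟨μ, hμ, rfl⟩
        have hmlow : μ b - 2*R ≤ m := by
          refine le_csInf hTne ?_
          rintro r' ⟨ν, hν, rfl⟩
          have := h2R hμ hν b hLb
          linarith
        linarith
      have hmM : ∀ μ : A →L[ℝ] ℝ, μ ∈ states e → m ≤ μ b ∧ μ b ≤ M :=
        fun μ hμ => ⟨csInf_le hTbddb ⟨μ, hμ, rfl⟩, le_csSup hTbdd ⟨μ, hμ, rfl⟩⟩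
      refine ⟨c, b - c • e, ?_, ?_, by abel⟩
      · have h0 : L ((-c) • e) = 0 := (hker _).2 ⟨-c, rfl⟩
        have hrw : b - c • e = b + (-c) • e := by
          rw [neg_smul]
          abel
        rw [hrw]
        calc L (b + (-c) • e) ≤ L b + L ((-c) • e) := hsub _ _
        _ ≤ 1 := by rw [h0]; linarith
      · rw [hkadison]
        refine csSup_le ⟨|μ₀ (b - c • e)|, μ₀, hμ₀, rfl⟩ ?_
        rintro r ⟨μ, hμ, rfl⟩
        have happ : μ (b - c • e) = μ b - c := by
          rw [map_sub, map_smul, smul_eq_mul, hμ.1, mul_one]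
        rw [happ, abs_le]
        have h5 := hmM μ hμ
        constructor <;> [linarith [h5.1]; linarith [h5.2]]
    · -- states empty : everything has norm 0
      have hbz : ‖b‖ = 0 := by
        rw [hkadison b]
        have hem : {r : ℝ | ∃ μ ∈ states e, r = |μ b|} = ∅ := by
          ext r
          simp only [Set.mem_setOf_eq, Set.mem_empty_iff_false, iff_false]
          rintro ⟨μ, hμ, _⟩
          exact hne ⟨μ, hμ⟩
        rw [hem, Real.sSup_empty]
      have hR0 : 0 ≤ R := by
        have hem : {r : ℝ | ∃ μ ∈ states e, ∃ ν ∈ states e, r = stateDist L μ ν} = ∅ := by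
          ext r
          simp only [Set.mem_setOf_eq, Set.mem_empty_iff_false, iff_false]
          rintro ⟨μ, hμ, _⟩
          exact hne ⟨μ, hμ⟩
        rw [hem, Real.sSup_empty] at hR
        linarith
      exact ⟨0, b, hLb, by rw [hbz]; exact hR0, by simp⟩
  · rintro ⟨c, a, hLa, _, rfl⟩
    have h0 : L (c • e) = 0 := (hker _).2 ⟨c, rfl⟩
    calc L (c • e + a) ≤ L (c • e) + L a := hsub _ _
    _ ≤ 1 := by rw [h0]; linarith
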